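/- Let n be even and let G be a triangle-free graph on n vertices with at least n²/4 edges. Then G is the balanced complete bipartite graph K_{n/2,n/2}. -/

import Mathlib

open Finset SimpleGraph

/-- The parity equivalence `Fin (2*m) ≃ Fin m ⊕ Fin m`. -/
def parityEquiv (m : ℕ) : Fin (2 * m) ≃ Fin m ⊕ Fin m where
  toFun v := if v.val % 2 = 0 then Sum.inl ⟨v.val / 2, by omega⟩ else Sum.inr ⟨v.val / 2, by omega⟩
  invFun x := x.elim (fun i => ⟨2 * i.val, by omega⟩) (fun i => ⟨2 * i.val + 1, by omega⟩)
  left_inv v := by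
    by_cases h : v.val % 2 = 0
    · simp only [if_pos h, Sum.elim_inl]; ext; simp; omega
    · simp only [if_neg h, Sum.elim_inr]; ext; simp; omega
  right_inv x := by
    rcases x with i | i
    · simp only [Sum.elim_inl]; simp only [show 2 * (i : ℕ) % 2 = 0 by omega, ↓reduceIte]
      congr 1; ext; simp; try omega
    · simp only [Sum.elim_inr]; simp only [show ¬ ((2 * (i : ℕ) + 1) % 2 = 0) by omega, ↓reduceIte]
      congr 1; ext; simp; try omega

/-- `turanGraph (2*m) 2` is isomorphic to the balanced complete bipartite graph. -/
def turanIso (m : ℕ) : turanGraph (2 * m) 2 ≃g completeBipartiteGraph (Fin m) (Fin m) where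
  toEquiv := parityEquiv m
  map_rel_iff' := by
    intro v w
    simp only [parityEquiv, Equiv.coe_fn_mk, turanGraph, completeBipartiteGraph]
    by_cases hv : v.val % 2 = 0 <;> by_cases hw : w.val % 2 = 0 <;>
      simp [hv, hw] <;> omega

instance instDecCB (m : ℕ) : DecidableRel (completeBipartiteGraph (Fin m) (Fin m)).Adj :=
  fun v w => by simp only [completeBipartiteGraph_adj]; infer_instance

lemma completeBipartite_card_edges (m : ℕ) :
    (completeBipartiteGraph (Fin m) (Fin m)).edgeFinset.card = m * m := by
  have hdeg : ∀ v : Fin m ⊕ Fin m, (completeBipartiteGraph (Fin m) (Fin m)).degree v = m := by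
    intro v
    rw [← card_neighborFinset_eq_degree]
    rcases v with i | i
    · have : (completeBipartiteGraph (Fin m) (Fin m)).neighborFinset (Sum.inl i) =
          univ.map ⟨Sum.inr, Sum.inr_injective⟩ := by
        ext w; rcases w with j | j <;> simp
      rw [this]; simp
    · have : (completeBipartiteGraph (Fin m) (Fin m)).neighborFinset (Sum.inr i) =
          univ.map ⟨Sum.inl, Sum.inl_injective⟩ := by
        ext w; rcases w with j | j <;> simp
      rw [this]; simp
  have hsum := SimpleGraph.sum_degrees_eq_twice_card_edges
    (completeBipartiteGraph (Fin m) (Fin m))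
  simp only [hdeg, Finset.sum_const, Finset.card_univ, Fintype.card_sum, Fintype.card_fin,
    smul_eq_mul] at hsum
  ring_nf at hsum ⊢
  linarith

lemma turan_card_edges (m : ℕ) : (turanGraph (2 * m) 2).edgeFinset.card = m * m := by
  rw [(turanIso m).card_edgeFinset_eq, completeBipartite_card_edges]

theorem mantel_equality {V : Type*} [Fintype V] [DecidableEq V] (G : SimpleGraph V)
    [DecidableRel G.Adj] (n : ℕ) (hn : Fintype.card V = n) (heven : Even n)
    (hfree : G.CliqueFree 3) (hm : n ^ 2 / 4 ≤ G.edgeFinset.card) :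
    Nonempty (G ≃g completeBipartiteGraph (Fin (n / 2)) (Fin (n / 2))) := by
  obtain ⟨m, hmn⟩ := heven
  have hn2 : n = 2 * m := by omega
  subst hn2
  have hm2 : 2 * m / 2 = m := by omega
  rw [hm2]
  -- G is Turán-maximal for r = 2
  have htm : G.IsTuranMaximal 2 := by
    refine ⟨hfree, fun H _ hHfree => ?_⟩
    -- transfer H to Fin (2*m)
    have e : V ≃ Fin (2 * m) := by
      apply Fintype.equivFinOfCardEq hn
    have hiso : H ≃g H.map e.toEmbedding := SimpleGraph.Iso.map e H
    have hfree' : (H.map e.toEmbedding).CliqueFree 3 := hHfree.comap ⟨hiso.symm.toCopy⟩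
    have hb := (isTuranMaximal_turanGraph (n := 2 * m) (r := 2) (by norm_num)).2
      (G' := H.map e.toEmbedding) hfree'
    rw [turan_card_edges] at hb
    calc H.edgeFinset.card = (H.map e.toEmbedding).edgeFinset.card := hiso.card_edgeFinset_eq
      _ ≤ m * m := hb
      _ = (2 * m) ^ 2 / 4 := by ring_nf; omega
      _ ≤ G.edgeFinset.card := hm
  obtain ⟨f⟩ := htm.nonempty_iso_turanGraph
  rw [hn] at f
  exact ⟨(turanIso m).comp f⟩
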